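/- Let A and B be separable unital C*-algebras, and suppose there exist unital *-homomorphisms φ : A → B and ψ : B → A such that ψ ∘ φ is approximately unitarily equivalent to the identity map of A and φ ∘ ψ is approximately unitarily equivalent to the identity map of B. Then there exists a *-algebra isomorphism θ : A → B such that θ is approximately unitarily equivalent to φ and θ⁻¹ is approximately unitarily equivalent to ψ. -/

import Mathlib

/-- Two maps `φ ψ : A → B` between unital C*-algebras are *approximately unitarily
equivalent* if for every finite subset `F ⊆ A` and every `ε > 0` there is a unitary
`u ∈ B` with `‖u φ(x) u* - ψ(x)‖ < ε` for all `x ∈ F`. -/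
def ApproxUnitarilyEquiv {A B : Type*} [CStarAlgebra A] [CStarAlgebra B]
    (φ ψ : A → B) : Prop :=
  ∀ (F : Finset A) (ε : ℝ), 0 < ε →
    ∃ u : unitary B, ∀ x ∈ F, ‖(u : B) * φ x * star (u : B) - ψ x‖ < ε

section Aux
variable {E : Type*}

lemma elliott_conj_norm [CStarAlgebra E] (u : unitary E) (z : E) :
    ‖(u : E) * z * star (u : E)‖ = ‖z‖ := by
  have h1 : ‖((u : E) * z) * (star u : E)‖ = ‖(u : E) * z‖ := by
    simpa [Unitary.coe_star] using CStarRing.norm_mul_coe_unitary ((u : E) * z) (star u)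
  rw [h1, CStarRing.norm_coe_unitary_mul]

lemma elliott_sandwich [Monoid E] [StarMul E] (w z x : E) (hz : star z * z = 1) :
    (w * star z) * (z * x * star z) * star (w * star z) = w * x * star w := by
  have e1 : ∀ y : E, star z * (z * y) = y := fun y => by rw [← mul_assoc, hz, one_mul]
  simp only [star_mul, star_star, mul_assoc, e1]

lemma elliott_conj_mul [Monoid E] [StarMul E] (u x y : E) (h : star u * u = 1) :
    u * (x * y) * star u = (u * x * star u) * (u * y * star u) := by
  have e1 : ∀ w : E, star u * (u * w) = w := fun w => by rw [← mul_assoc, h, one_mul]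
  simp only [mul_assoc, e1]

lemma elliott_unconj [Monoid E] [StarMul E] (u z : E) (h : star u * u = 1) :
    star u * (u * z * star u) * u = z := by
  have e1 : ∀ y : E, star u * (u * y) = y := fun y => by rw [← mul_assoc, h, one_mul]
  simp only [mul_assoc, e1]
  rw [h, mul_one]

end Aux

/-- Elliott's two-sided intertwining argument, strong form: if `φ : A → B` and `ψ : B → A`
are unital `*`-homomorphisms between separable unital C*-algebras with `ψ ∘ φ ≈au id_A` and
`φ ∘ ψ ≈au id_B`, then there is a `*`-isomorphism `θ : A ≅ B` with `θ ≈au φ` and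
`θ⁻¹ ≈au ψ`. -/
theorem elliott_two_sided_intertwining_strong
    {A B : Type*} [CStarAlgebra A] [CStarAlgebra B]
    [TopologicalSpace.SeparableSpace A] [TopologicalSpace.SeparableSpace B]
    (φ : A →⋆ₐ[ℂ] B) (ψ : B →⋆ₐ[ℂ] A)
    (h1 : ApproxUnitarilyEquiv (fun a => ψ (φ a)) (id : A → A))
    (h2 : ApproxUnitarilyEquiv (fun b => φ (ψ b)) (id : B → B)) :
    ∃ θ : A ≃⋆ₐ[ℂ] B,
      ApproxUnitarilyEquiv (fun a => θ a) (fun a => φ a) ∧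
      ApproxUnitarilyEquiv (fun b => θ.symm b) (fun b => ψ b) := by
  classical
  -- dense sequences
  have nA : Nonempty A := ⟨0⟩
  have nB : Nonempty B := ⟨0⟩
  obtain ⟨a, ha⟩ : ∃ a : ℕ → A, DenseRange a := ⟨_, TopologicalSpace.denseRange_denseSeq A⟩
  obtain ⟨b, hb⟩ : ∃ b : ℕ → B, DenseRange b := ⟨_, TopologicalSpace.denseRange_denseSeq B⟩
  -- choice of correcting unitaries
  have hQex : ∀ (n : ℕ) (F : Finset A) (P : unitary B), ∃ Q : unitary A,
      ∀ x ∈ F, ‖(Q : A) * ψ ((P : B) * φ x * star (P : B)) * star (Q : A) - x‖ < (1/2 : ℝ)^n := by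
    intro n F P
    obtain ⟨w, hw⟩ := h1 F ((1/2 : ℝ)^n) (by positivity)
    have hmem : ψ (P : B) ∈ unitary A := by
      rw [Unitary.mem_iff]
      constructor
      · rw [← map_star, ← map_mul, Unitary.star_mul_self_of_mem P.prop, map_one]
      · rw [← map_star, ← map_mul, Unitary.mul_star_self_of_mem P.prop, map_one]
    refine ⟨w * star (⟨ψ (P : B), hmem⟩ : unitary A), fun x hx => ?_⟩
    have key : ((w * star (⟨ψ (P : B), hmem⟩ : unitary A) : unitary A) : A)
          * ψ ((P : B) * φ x * star (P : B))
          * star ((w * star (⟨ψ (P : B), hmem⟩ : unitary A) : unitary A) : A)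
        = (w : A) * ψ (φ x) * star (w : A) := by
      have hψP : ψ ((P : B) * φ x * star (P : B)) = ψ (P : B) * ψ (φ x) * star (ψ (P : B)) := by
        rw [map_mul, map_mul, map_star]
      rw [Submonoid.coe_mul, Unitary.coe_star, hψP]
      exact elliott_sandwich (w : A) (ψ (P : B)) (ψ (φ x))
        (by rw [← map_star, ← map_mul, Unitary.star_mul_self_of_mem P.prop, map_one])
    rw [key]
    simpa using hw x hx
  have hPex : ∀ (n : ℕ) (F : Finset B) (Q : unitary A), ∃ P : unitary B,
      ∀ y ∈ F, ‖(P : B) * φ ((Q : A) * ψ y * star (Q : A)) * star (P : B) - y‖ < (1/2 : ℝ)^n := by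
    intro n F Q
    obtain ⟨w, hw⟩ := h2 F ((1/2 : ℝ)^n) (by positivity)
    have hmem : φ (Q : A) ∈ unitary B := by
      rw [Unitary.mem_iff]
      constructor
      · rw [← map_star, ← map_mul, Unitary.star_mul_self_of_mem Q.prop, map_one]
      · rw [← map_star, ← map_mul, Unitary.mul_star_self_of_mem Q.prop, map_one]
    refine ⟨w * star (⟨φ (Q : A), hmem⟩ : unitary B), fun y hy => ?_⟩
    have key : ((w * star (⟨φ (Q : A), hmem⟩ : unitary B) : unitary B) : B)
          * φ ((Q : A) * ψ y * star (Q : A))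
          * star ((w * star (⟨φ (Q : A), hmem⟩ : unitary B) : unitary B) : B)
        = (w : B) * φ (ψ y) * star (w : B) := by
      have hφQ : φ ((Q : A) * ψ y * star (Q : A)) = φ (Q : A) * φ (ψ y) * star (φ (Q : A)) := by
        rw [map_mul, map_mul, map_star]
      rw [Submonoid.coe_mul, Unitary.coe_star, hφQ]
      exact elliott_sandwich (w : B) (φ (Q : A)) (φ (ψ y))
        (by rw [← map_star, ← map_mul, Unitary.star_mul_self_of_mem Q.prop, map_one])
    rw [key]
    simpa using hw y hy
  choose Qc hQc using hQex
  choose Pc hPc using hPex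
  -- the recursive construction
  obtain ⟨R, hR0, hRS⟩ : ∃ R : ℕ → unitary B × unitary A,
      R 0 = ((1 : unitary B),
        Qc 0 ((Finset.range 1).image a ∪ (Finset.range 0).image
          (fun j => ((1 : unitary A) : A) * ψ (b j) * star ((1 : unitary A) : A))) 1) ∧
      ∀ n, R (n+1) =
        (Pc n ((Finset.range (n+1)).image b ∪ (Finset.range (n+1)).image
            (fun j => ((R n).1 : B) * φ (a j) * star ((R n).1 : B))) (R n).2,
         Qc (n+1) ((Finset.range (n+2)).image a ∪ (Finset.range (n+1)).image
            (fun j => ((R n).2 : A) * ψ (b j) * star ((R n).2 : A)))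
           (Pc n ((Finset.range (n+1)).image b ∪ (Finset.range (n+1)).image
            (fun j => ((R n).1 : B) * φ (a j) * star ((R n).1 : B))) (R n).2)) := by
    refine ⟨fun n => Nat.rec ((1 : unitary B),
        Qc 0 ((Finset.range 1).image a ∪ (Finset.range 0).image
          (fun j => ((1 : unitary A) : A) * ψ (b j) * star ((1 : unitary A) : A))) 1)
      (fun n prev =>
        (Pc n ((Finset.range (n+1)).image b ∪ (Finset.range (n+1)).image
            (fun j => (prev.1 : B) * φ (a j) * star (prev.1 : B))) prev.2,
         Qc (n+1) ((Finset.range (n+2)).image a ∪ (Finset.range (n+1)).image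
            (fun j => (prev.2 : A) * ψ (b j) * star (prev.2 : A)))
           (Pc n ((Finset.range (n+1)).image b ∪ (Finset.range (n+1)).image
            (fun j => (prev.1 : B) * φ (a j) * star (prev.1 : B))) prev.2))) n, rfl, fun n => rfl⟩
  have hPS : ∀ n, (R (n+1)).1 = Pc n ((Finset.range (n+1)).image b ∪ (Finset.range (n+1)).image
      (fun j => ((R n).1 : B) * φ (a j) * star ((R n).1 : B))) (R n).2 := fun n => by rw [hRS n]
  have hQS : ∀ n, (R (n+1)).2 = Qc (n+1) ((Finset.range (n+2)).image a ∪ (Finset.range (n+1)).image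
      (fun j => ((R n).2 : A) * ψ (b j) * star ((R n).2 : A))) (R (n+1)).1 := fun n => by
    rw [hRS n]
  -- notation for the adjusted maps
  set φf : ℕ → A → B := fun n x => ((R n).1 : B) * φ x * star ((R n).1 : B) with hφf
  set ψf : ℕ → B → A := fun n y => ((R n).2 : A) * ψ y * star ((R n).2 : A) with hψf
  -- key estimates
  have E1 : ∀ n j, j ≤ n → ‖ψf n (φf n (a j)) - a j‖ < (1/2 : ℝ)^n := by
    intro n j hj
    cases n with
    | zero =>
      have hj0 : j = 0 := Nat.le_zero.mp hj
      subst hj0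
      rw [hφf, hψf]
      simp only [hR0]
      exact hQc 0 _ 1 (a 0) (Finset.mem_union_left _
        (Finset.mem_image_of_mem a (Finset.mem_range.mpr Nat.zero_lt_one)))
    | succ m =>
      rw [hφf, hψf]
      simp only []
      rw [hQS m]
      exact hQc (m+1) _ (R (m+1)).1 (a j) (Finset.mem_union_left _
        (Finset.mem_image_of_mem a (Finset.mem_range.mpr (by omega))))
  have E1' : ∀ n j, j ≤ n →
      ‖ψf (n+1) (φf (n+1) (ψf n (b j))) - ψf n (b j)‖ < (1/2 : ℝ)^(n+1) := by
    intro n j hj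
    rw [hφf, hψf]
    simp only []
    rw [hQS n]
    exact hQc (n+1) _ (R (n+1)).1 _ (Finset.mem_union_right _
      (Finset.mem_image_of_mem _ (Finset.mem_range.mpr (by omega))))
  have E23 : ∀ n (y : B), y ∈ (Finset.range (n+1)).image b ∪ (Finset.range (n+1)).image
      (fun j => ((R n).1 : B) * φ (a j) * star ((R n).1 : B)) →
      ‖φf (n+1) (ψf n y) - y‖ < (1/2 : ℝ)^n := by
    intro n y hy
    rw [hφf, hψf]
    simp only []
    rw [hPS n]
    exact hPc n _ (R n).2 y hy
  have E2 : ∀ n j, j ≤ n → ‖φf (n+1) (ψf n (b j)) - b j‖ < (1/2 : ℝ)^n := fun n j hj =>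
    E23 n (b j) (Finset.mem_union_left _
      (Finset.mem_image_of_mem b (Finset.mem_range.mpr (by omega))))
  have E3 : ∀ n j, j ≤ n → ‖φf (n+1) (ψf n (φf n (a j))) - φf n (a j)‖ < (1/2 : ℝ)^n :=
    fun n j hj => E23 n _ (Finset.mem_union_right _
      (Finset.mem_image_of_mem _ (Finset.mem_range.mpr (by omega))))
  -- Lipschitz estimates
  have lipφ : ∀ n (x y : A), ‖φf n x - φf n y‖ ≤ ‖x - y‖ := by
    intro n x y
    have e : φf n x - φf n y = ((R n).1 : B) * (φ x - φ y) * star ((R n).1 : B) := by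
      rw [hφf]; noncomm_ring
    rw [e, elliott_conj_norm, ← map_sub]
    exact NonUnitalStarAlgHom.norm_apply_le φ _
  have lipψ : ∀ n (x y : B), ‖ψf n x - ψf n y‖ ≤ ‖x - y‖ := by
    intro n x y
    have e : ψf n x - ψf n y = ((R n).2 : A) * (ψ x - ψ y) * star ((R n).2 : A) := by
      rw [hψf]; noncomm_ring
    rw [e, elliott_conj_norm, ← map_sub]
    exact NonUnitalStarAlgHom.norm_apply_le ψ _
  -- telescoping estimates
  have T1 : ∀ n j, j ≤ n → ‖φf (n+1) (a j) - φf n (a j)‖ ≤ 2 * (1/2 : ℝ)^n := by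
    intro n j hj
    have tri := dist_triangle (φf (n+1) (a j)) (φf (n+1) (ψf n (φf n (a j)))) (φf n (a j))
    simp only [dist_eq_norm] at tri
    have b1 : ‖φf (n+1) (a j) - φf (n+1) (ψf n (φf n (a j)))‖ ≤ ‖a j - ψf n (φf n (a j))‖ :=
      lipφ (n+1) _ _
    have b2 : ‖a j - ψf n (φf n (a j))‖ < (1/2 : ℝ)^n := by
      rw [norm_sub_rev]; exact E1 n j hj
    have b3 := E3 n j hj
    linarith
  have T2 : ∀ n j, j ≤ n → ‖ψf (n+1) (b j) - ψf n (b j)‖ ≤ 2 * (1/2 : ℝ)^n := by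
    intro n j hj
    have tri := dist_triangle (ψf (n+1) (b j)) (ψf (n+1) (φf (n+1) (ψf n (b j)))) (ψf n (b j))
    simp only [dist_eq_norm] at tri
    have b1 : ‖ψf (n+1) (b j) - ψf (n+1) (φf (n+1) (ψf n (b j)))‖
        ≤ ‖b j - φf (n+1) (ψf n (b j))‖ := lipψ (n+1) _ _
    have b2 : ‖b j - φf (n+1) (ψf n (b j))‖ < (1/2 : ℝ)^n := by
      rw [norm_sub_rev]; exact E2 n j hj
    have b3 := E1' n j hj
    have hp : (1/2 : ℝ)^(n+1) ≤ (1/2 : ℝ)^n :=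
      pow_le_pow_of_le_one (by norm_num) (by norm_num) (by omega)
    linarith
  -- geometric control
  have Sφ : ∀ j n k, j ≤ n →
      ‖φf (n+k) (a j) - φf n (a j)‖ ≤ 4 * (1/2 : ℝ)^n - 4 * (1/2 : ℝ)^(n+k) := by
    intro j n k hj
    induction k with
    | zero => simp
    | succ k ih =>
      have tri := dist_triangle (φf (n+k+1) (a j)) (φf (n+k) (a j)) (φf n (a j))
      simp only [dist_eq_norm] at tri
      have h1 : ‖φf (n+k+1) (a j) - φf (n+k) (a j)‖ ≤ 2 * (1/2 : ℝ)^(n+k) :=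
        T1 (n+k) j (by omega)
      have hpow : (1/2 : ℝ)^(n+(k+1)) = (1/2 : ℝ)^(n+k) * (1/2) := by
        rw [show n+(k+1) = (n+k)+1 from rfl, pow_succ]
      have : ‖φf (n+(k+1)) (a j) - φf n (a j)‖ = ‖φf (n+k+1) (a j) - φf n (a j)‖ := rfl
      rw [this, hpow] at *
      linarith
  have Sψ : ∀ j n k, j ≤ n →
      ‖ψf (n+k) (b j) - ψf n (b j)‖ ≤ 4 * (1/2 : ℝ)^n - 4 * (1/2 : ℝ)^(n+k) := by
    intro j n k hj
    induction k with
    | zero => simp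
    | succ k ih =>
      have tri := dist_triangle (ψf (n+k+1) (b j)) (ψf (n+k) (b j)) (ψf n (b j))
      simp only [dist_eq_norm] at tri
      have h1 : ‖ψf (n+k+1) (b j) - ψf (n+k) (b j)‖ ≤ 2 * (1/2 : ℝ)^(n+k) :=
        T2 (n+k) j (by omega)
      have hpow : (1/2 : ℝ)^(n+(k+1)) = (1/2 : ℝ)^(n+k) * (1/2) := by
        rw [show n+(k+1) = (n+k)+1 from rfl, pow_succ]
      have : ‖ψf (n+(k+1)) (b j) - ψf n (b j)‖ = ‖ψf (n+k+1) (b j) - ψf n (b j)‖ := rfl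
      rw [this, hpow] at *
      linarith
  have Sφ' : ∀ j n m, j ≤ n → n ≤ m → ‖φf m (a j) - φf n (a j)‖ ≤ 4 * (1/2 : ℝ)^n := by
    intro j n m hj hnm
    obtain ⟨k, rfl⟩ := Nat.exists_eq_add_of_le hnm
    have := Sφ j n k hj
    have hp : (0:ℝ) ≤ 4 * (1/2 : ℝ)^(n+k) := by positivity
    linarith
  have Sψ' : ∀ j n m, j ≤ n → n ≤ m → ‖ψf m (b j) - ψf n (b j)‖ ≤ 4 * (1/2 : ℝ)^n := by
    intro j n m hj hnm
    obtain ⟨k, rfl⟩ := Nat.exists_eq_add_of_le hnm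
    have := Sψ j n k hj
    have hp : (0:ℝ) ≤ 4 * (1/2 : ℝ)^(n+k) := by positivity
    linarith
  -- Cauchy sequences and limits
  have cauφ : ∀ x : A, CauchySeq (fun n => φf n x) := by
    intro x
    rw [Metric.cauchySeq_iff']
    intro ε hε
    obtain ⟨j, hja⟩ := Metric.denseRange_iff.mp ha x (ε/4) (by positivity)
    obtain ⟨N0, hN0⟩ : ∃ N : ℕ, 4 * (1/2 : ℝ)^N < ε/2 := by
      obtain ⟨N, hN⟩ := exists_pow_lt_of_lt_one (show (0:ℝ) < ε/8 by positivity)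
        (by norm_num : (1/2 : ℝ) < 1)
      exact ⟨N, by linarith⟩
    refine ⟨max j N0, fun n hn => ?_⟩
    have tri := dist_triangle4 (φf n x) (φf n (a j)) (φf (max j N0) (a j)) (φf (max j N0) x)
    simp only [dist_eq_norm] at tri ⊢
    have b1 : ‖φf n x - φf n (a j)‖ ≤ ‖x - a j‖ := lipφ n _ _
    have b1' : ‖x - a j‖ < ε/4 := by rw [← dist_eq_norm]; exact hja
    have b2 : ‖φf n (a j) - φf (max j N0) (a j)‖ ≤ 4 * (1/2 : ℝ)^(max j N0) :=
      Sφ' j (max j N0) n (le_max_left _ _) hn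
    have b2' : (4 : ℝ) * (1/2 : ℝ)^(max j N0) ≤ 4 * (1/2 : ℝ)^N0 := by
      have := pow_le_pow_of_le_one (by norm_num : (0:ℝ) ≤ 1/2) (by norm_num)
        (le_max_right j N0)
      linarith
    have b3 : ‖φf (max j N0) (a j) - φf (max j N0) x‖ ≤ ‖a j - x‖ := lipφ _ _ _
    have b3' : ‖a j - x‖ < ε/4 := by rw [norm_sub_rev, ← dist_eq_norm]; exact hja
    linarith
  have cauψ : ∀ y : B, CauchySeq (fun n => ψf n y) := by
    intro y
    rw [Metric.cauchySeq_iff']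
    intro ε hε
    obtain ⟨j, hjb⟩ := Metric.denseRange_iff.mp hb y (ε/4) (by positivity)
    obtain ⟨N0, hN0⟩ : ∃ N : ℕ, 4 * (1/2 : ℝ)^N < ε/2 := by
      obtain ⟨N, hN⟩ := exists_pow_lt_of_lt_one (show (0:ℝ) < ε/8 by positivity)
        (by norm_num : (1/2 : ℝ) < 1)
      exact ⟨N, by linarith⟩
    refine ⟨max j N0, fun n hn => ?_⟩
    have tri := dist_triangle4 (ψf n y) (ψf n (b j)) (ψf (max j N0) (b j)) (ψf (max j N0) y)
    simp only [dist_eq_norm] at tri ⊢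
    have b1 : ‖ψf n y - ψf n (b j)‖ ≤ ‖y - b j‖ := lipψ n _ _
    have b1' : ‖y - b j‖ < ε/4 := by rw [← dist_eq_norm]; exact hjb
    have b2 : ‖ψf n (b j) - ψf (max j N0) (b j)‖ ≤ 4 * (1/2 : ℝ)^(max j N0) :=
      Sψ' j (max j N0) n (le_max_left _ _) hn
    have b2' : (4 : ℝ) * (1/2 : ℝ)^(max j N0) ≤ 4 * (1/2 : ℝ)^N0 := by
      have := pow_le_pow_of_le_one (by norm_num : (0:ℝ) ≤ 1/2) (by norm_num)
        (le_max_right j N0)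
      linarith
    have b3 : ‖ψf (max j N0) (b j) - ψf (max j N0) y‖ ≤ ‖b j - y‖ := lipψ _ _ _
    have b3' : ‖b j - y‖ < ε/4 := by rw [norm_sub_rev, ← dist_eq_norm]; exact hjb
    linarith
  have convφ : ∀ x : A, ∃ L, Filter.Tendsto (fun n => φf n x) Filter.atTop (nhds L) :=
    fun x => cauchySeq_tendsto_of_complete (cauφ x)
  have convψ : ∀ y : B, ∃ L, Filter.Tendsto (fun n => ψf n y) Filter.atTop (nhds L) :=
    fun y => cauchySeq_tendsto_of_complete (cauψ y)
  choose θ₀ hθ₀ using convφ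
  choose θ'₀ hθ'₀ using convψ
  -- composites tend to the identity
  have hcomp1 : ∀ x : A, Filter.Tendsto (fun n => ψf n (φf n x)) Filter.atTop (nhds x) := by
    intro x
    rw [Metric.tendsto_atTop]
    intro ε hε
    obtain ⟨j, hja⟩ := Metric.denseRange_iff.mp ha x (ε/3) (by positivity)
    obtain ⟨N0, hN0⟩ : ∃ N : ℕ, (1/2 : ℝ)^N < ε/3 :=
      exists_pow_lt_of_lt_one (by positivity) (by norm_num : (1/2 : ℝ) < 1)
    refine ⟨max j N0, fun n hn => ?_⟩
    have tri := dist_triangle4 (ψf n (φf n x)) (ψf n (φf n (a j))) (a j) x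
    simp only [dist_eq_norm] at tri ⊢
    have b1 : ‖ψf n (φf n x) - ψf n (φf n (a j))‖ ≤ ‖x - a j‖ :=
      (lipψ n _ _).trans (lipφ n _ _)
    have b1' : ‖x - a j‖ < ε/3 := by rw [← dist_eq_norm]; exact hja
    have b2 : ‖ψf n (φf n (a j)) - a j‖ < (1/2 : ℝ)^n :=
      E1 n j (le_trans (le_max_left _ _) hn)
    have b2' : (1/2 : ℝ)^n ≤ (1/2 : ℝ)^N0 :=
      pow_le_pow_of_le_one (by norm_num) (by norm_num) (le_trans (le_max_right _ _) hn)
    have b3 : ‖a j - x‖ < ε/3 := by rw [norm_sub_rev, ← dist_eq_norm]; exact hja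
    linarith
  have hcomp2 : ∀ y : B, Filter.Tendsto (fun n => φf (n+1) (ψf n y)) Filter.atTop (nhds y) := by
    intro y
    rw [Metric.tendsto_atTop]
    intro ε hε
    obtain ⟨j, hjb⟩ := Metric.denseRange_iff.mp hb y (ε/3) (by positivity)
    obtain ⟨N0, hN0⟩ : ∃ N : ℕ, (1/2 : ℝ)^N < ε/3 :=
      exists_pow_lt_of_lt_one (by positivity) (by norm_num : (1/2 : ℝ) < 1)
    refine ⟨max j N0, fun n hn => ?_⟩
    have tri := dist_triangle4 (φf (n+1) (ψf n y)) (φf (n+1) (ψf n (b j))) (b j) y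
    simp only [dist_eq_norm] at tri ⊢
    have b1 : ‖φf (n+1) (ψf n y) - φf (n+1) (ψf n (b j))‖ ≤ ‖y - b j‖ :=
      (lipφ (n+1) _ _).trans (lipψ n _ _)
    have b1' : ‖y - b j‖ < ε/3 := by rw [← dist_eq_norm]; exact hjb
    have b2 : ‖φf (n+1) (ψf n (b j)) - b j‖ < (1/2 : ℝ)^n :=
      E2 n j (le_trans (le_max_left _ _) hn)
    have b2' : (1/2 : ℝ)^n ≤ (1/2 : ℝ)^N0 :=
      pow_le_pow_of_le_one (by norm_num) (by norm_num) (le_trans (le_max_right _ _) hn)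
    have b3 : ‖b j - y‖ < ε/3 := by rw [norm_sub_rev, ← dist_eq_norm]; exact hjb
    linarith
  -- θ'₀ is a two-sided inverse of θ₀
  have linv : ∀ x : A, θ'₀ (θ₀ x) = x := by
    intro x
    refine tendsto_nhds_unique (hθ'₀ (θ₀ x)) ?_
    have hd : Filter.Tendsto (fun n => ψf n (θ₀ x) - ψf n (φf n x)) Filter.atTop (nhds 0) := by
      refine squeeze_zero_norm (a := fun n => ‖φf n x - θ₀ x‖) (fun n => ?_)
        (tendsto_iff_norm_sub_tendsto_zero.mp (hθ₀ x))
      refine (lipψ n _ _).trans_eq ?_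
      rw [norm_sub_rev]
    have := hd.add (hcomp1 x)
    simpa using this
  have rinv : ∀ y : B, θ₀ (θ'₀ y) = y := by
    intro y
    have l1 : Filter.Tendsto (fun n => φf (n+1) (θ'₀ y)) Filter.atTop (nhds (θ₀ (θ'₀ y))) :=
      (hθ₀ (θ'₀ y)).comp (Filter.tendsto_add_atTop_nat 1)
    refine tendsto_nhds_unique l1 ?_
    have hd : Filter.Tendsto (fun n => φf (n+1) (θ'₀ y) - φf (n+1) (ψf n y))
        Filter.atTop (nhds 0) := by
      refine squeeze_zero_norm (a := fun n => ‖ψf n y - θ'₀ y‖) (fun n => ?_)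
        (tendsto_iff_norm_sub_tendsto_zero.mp (hθ'₀ y))
      refine (lipφ (n+1) _ _).trans_eq ?_
      rw [norm_sub_rev]
    have := hd.add (hcomp2 y)
    simpa using this
  -- each φf n is a unital star-algebra map
  have hmul' : ∀ n (x y : A), φf n (x * y) = φf n x * φf n y := by
    intro n x y
    rw [hφf]
    simp only [map_mul]
    exact elliott_conj_mul _ _ _ (Unitary.star_mul_self_of_mem (R n).1.prop)
  have hadd' : ∀ n (x y : A), φf n (x + y) = φf n x + φf n y := by
    intro n x y
    rw [hφf]
    simp only [map_add, mul_add, add_mul]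
  have hsmul' : ∀ n (c : ℂ) (x : A), φf n (c • x) = c • φf n x := by
    intro n c x
    rw [hφf]
    simp only [map_smul, mul_smul_comm, smul_mul_assoc]
  have hstar' : ∀ n (x : A), φf n (star x) = star (φf n x) := by
    intro n x
    rw [hφf]
    simp only [map_star, star_mul, star_star, mul_assoc]
  -- θ₀ is a star-algebra morphism
  have mulθ : ∀ x y : A, θ₀ (x * y) = θ₀ x * θ₀ y := by
    intro x y
    have h := (hθ₀ x).mul (hθ₀ y)
    rw [show (fun n => φf n x * φf n y) = fun n => φf n (x * y) from
      funext fun n => (hmul' n x y).symm] at h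
    exact tendsto_nhds_unique (hθ₀ (x * y)) h
  have addθ : ∀ x y : A, θ₀ (x + y) = θ₀ x + θ₀ y := by
    intro x y
    have h := (hθ₀ x).add (hθ₀ y)
    rw [show (fun n => φf n x + φf n y) = fun n => φf n (x + y) from
      funext fun n => (hadd' n x y).symm] at h
    exact tendsto_nhds_unique (hθ₀ (x + y)) h
  have smulθ : ∀ (c : ℂ) (x : A), θ₀ (c • x) = c • θ₀ x := by
    intro c x
    have h := (hθ₀ x).const_smul c
    rw [show (fun n => c • φf n x) = fun n => φf n (c • x) from
      funext fun n => (hsmul' n c x).symm] at h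
    exact tendsto_nhds_unique (hθ₀ (c • x)) h
  have starθ : ∀ x : A, θ₀ (star x) = star (θ₀ x) := by
    intro x
    have h := (hθ₀ x).star
    rw [show (fun n => star (φf n x)) = fun n => φf n (star x) from
      funext fun n => (hstar' n x).symm] at h
    exact tendsto_nhds_unique (hθ₀ (star x)) h
  -- the star-algebra isomorphism
  refine ⟨{ toFun := θ₀, invFun := θ'₀, left_inv := linv, right_inv := rinv,
            map_mul' := mulθ, map_add' := addθ, map_smul' := smulθ, map_star' := starθ },
    ?_, ?_⟩
  · -- θ ≈au φ
    intro F ε hε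
    have hev : ∀ᶠ n in Filter.atTop, ∀ x ∈ F, ‖φf n x - θ₀ x‖ < ε := by
      rw [Filter.eventually_all_finset]
      intro x hx
      obtain ⟨N, hN⟩ := Metric.tendsto_atTop.mp (hθ₀ x) ε hε
      exact Filter.eventually_atTop.mpr ⟨N, fun n hn => by
        have := hN n hn; rwa [dist_eq_norm] at this⟩
    obtain ⟨N, hN⟩ := Filter.eventually_atTop.mp hev
    refine ⟨star (R N).1, fun x hx => ?_⟩
    show ‖(↑(star (R N).1) : B) * θ₀ x * star (↑(star (R N).1) : B) - φ x‖ < ε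
    rw [Unitary.coe_star, star_star]
    have huni := Unitary.star_mul_self_of_mem (R N).1.prop
    have e : star (((R N).1 : B)) * θ₀ x * ((R N).1 : B) - φ x
        = star (((R N).1 : B)) * (θ₀ x - ((R N).1 : B) * φ x * star (((R N).1 : B)))
          * ((R N).1 : B) := by
      rw [mul_sub, sub_mul, elliott_unconj _ (φ x) huni]
    rw [e]
    have hn2 : ‖star (((R N).1 : B))
          * (θ₀ x - ((R N).1 : B) * φ x * star (((R N).1 : B))) * ((R N).1 : B)‖
        = ‖θ₀ x - ((R N).1 : B) * φ x * star (((R N).1 : B))‖ := by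
      have := elliott_conj_norm (star (R N).1)
        (θ₀ x - ((R N).1 : B) * φ x * star (((R N).1 : B)))
      rwa [Unitary.coe_star, star_star] at this
    rw [hn2, norm_sub_rev]
    exact hN N le_rfl x hx
  · -- θ.symm ≈au ψ
    intro F ε hε
    have hev : ∀ᶠ n in Filter.atTop, ∀ y ∈ F, ‖ψf n y - θ'₀ y‖ < ε := by
      rw [Filter.eventually_all_finset]
      intro y hy
      obtain ⟨N, hN⟩ := Metric.tendsto_atTop.mp (hθ'₀ y) ε hε
      exact Filter.eventually_atTop.mpr ⟨N, fun n hn => by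
        have := hN n hn; rwa [dist_eq_norm] at this⟩
    obtain ⟨N, hN⟩ := Filter.eventually_atTop.mp hev
    refine ⟨star (R N).2, fun y hy => ?_⟩
    show ‖(↑(star (R N).2) : A) * θ'₀ y * star (↑(star (R N).2) : A) - ψ y‖ < ε
    rw [Unitary.coe_star, star_star]
    have huni := Unitary.star_mul_self_of_mem (R N).2.prop
    have e : star (((R N).2 : A)) * θ'₀ y * ((R N).2 : A) - ψ y
        = star (((R N).2 : A)) * (θ'₀ y - ((R N).2 : A) * ψ y * star (((R N).2 : A)))
          * ((R N).2 : A) := by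
      rw [mul_sub, sub_mul, elliott_unconj _ (ψ y) huni]
    rw [e]
    have hn2 : ‖star (((R N).2 : A))
          * (θ'₀ y - ((R N).2 : A) * ψ y * star (((R N).2 : A))) * ((R N).2 : A)‖
        = ‖θ'₀ y - ((R N).2 : A) * ψ y * star (((R N).2 : A))‖ := by
      have := elliott_conj_norm (star (R N).2)
        (θ'₀ y - ((R N).2 : A) * ψ y * star (((R N).2 : A)))
      rwa [Unitary.coe_star, star_star] at this
    rw [hn2, norm_sub_rev]
    exact hN N le_rfl y hy
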